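/- Let x be a clustered graph signal of the form x[i] = Σ_l a_l·1_{C_l}[i] for the partition F, with noisy samples y[i] = x[i] + e[i] on a sampling set M ⊆ V that satisfies the network compatibility condition with constants K > 0 and L > 1, and let x̂ be any minimizer of the network Lasso objective with λ = 1/K. Then, writing x̃ := x̂ − x, the inequality λ·(L−1)·‖x̃‖_{∂F} ≤ 2·Σ_{i∈M} |e[i]| holds. -/

import Mathlib

open Finset

variable {V ι : Type*}

/-- Sum of `W i j * |x i − x j|` over a symmetric set `S` of directed edges,
counting each undirected edge `{i,j}` exactly once (hence the division by 2). -/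
noncomputable def edgeNorm (W : V → V → ℝ) (S : Finset (V × V)) (x : V → ℝ) : ℝ :=
  (∑ p ∈ S, W p.1 p.2 * |x p.1 - x p.2|) / 2

/-- The neighbourhood `N(i)` of a node `i`. -/
def nbhd [Fintype V] [DecidableEq V] (E : Finset (V × V)) (i : V) : Finset V :=
  Finset.univ.filter fun j => (i, j) ∈ E

/-- The demand induced by the flow `h` at node `i`:
`d[i] = Σ_{j ∈ N(i)} (h(j,i) − h(i,j))`. -/
noncomputable def demand [Fintype V] [DecidableEq V] (E : Finset (V × V))
    (h : V → V → ℝ) (i : V) : ℝ :=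
  ∑ j ∈ nbhd E i, (h j i - h i j)

/-- The boundary `∂F` of the partition with cluster assignment `cl`:
edges whose endpoints lie in different clusters. -/
def bdry [DecidableEq V] [DecidableEq ι] (E : Finset (V × V)) (cl : V → ι) :
    Finset (V × V) :=
  E.filter fun p => cl p.1 ≠ cl p.2

/-- The nodes `B(F)` incident to at least one boundary edge. -/
def bdryNodes [Fintype V] [DecidableEq V] [DecidableEq ι] (E : Finset (V × V))
    (cl : V → ι) : Finset V :=
  Finset.univ.filter fun i => ∃ j, (i, j) ∈ bdry E cl

/-- The sampling set `M` resolves the partition `cl` with constants `K, L`: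
for every choice of bits `b` on the boundary edges (one bit per undirected
boundary edge, encoded by `b (j,i) = !b (i,j)`), there is a flow `h` obeying
the capacity constraints on intra-cluster edges, carrying flow `L·W[i,j]` in
the direction selected by the bit on every boundary edge, and whose demands
satisfy `|d[i]| ≤ K` on `M` and `d[i] = 0` off `M`. -/
def Resolves [Fintype V] [DecidableEq V] [DecidableEq ι] (E : Finset (V × V))
    (W : V → V → ℝ) (cl : V → ι) (M : Finset V) (K L : ℝ) : Prop :=
  ∀ b : V × V → Bool, (∀ p ∈ bdry E cl, b (p.2, p.1) = !b p) →
    ∃ h : V → V → ℝ,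
      (∀ p ∈ E \ bdry E cl, |h p.1 p.2| ≤ W p.1 p.2) ∧
      (∀ p ∈ bdry E cl, h p.1 p.2 = (if b p then (1 : ℝ) else 0) * (L * W p.1 p.2)) ∧
      (∀ i ∈ M, |demand E h i| ≤ K) ∧
      (∀ i, i ∉ M → demand E h i = 0)

/-- Under the network compatibility condition with `K > 0` and
`L > 1`, any nLasso minimizer with `λ = 1/K` satisfies, for `x̃ = x̂ − x`,
`λ·(L−1)·‖x̃‖_{∂F} ≤ 2·Σ_{i∈M}|e[i]|`. -/
theorem minimizer_boundary_error_bound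
    [Fintype V] [DecidableEq V] [DecidableEq ι]
    (E : Finset (V × V)) (W : V → V → ℝ)
    (hEsymm : ∀ i j : V, (i, j) ∈ E → (j, i) ∈ E)
    (hEirr : ∀ i : V, (i, i) ∉ E)
    (hWsymm : ∀ i j : V, W i j = W j i)
    (hWpos : ∀ p ∈ E, 0 < W p.1 p.2)
    (hWzero : ∀ i j : V, (i, j) ∉ E → W i j = 0)
    (cl : V → ι) (a : ι → ℝ) (x : V → ℝ) (hx : ∀ i, x i = a (cl i))
    (M : Finset V) (e y : V → ℝ) (hy : ∀ i ∈ M, y i = x i + e i)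
    (K L : ℝ) (hK : 0 < K) (hL : 1 < L)
    (hcompat : ∀ z : V → ℝ,
      L * edgeNorm W (bdry E cl) z ≤
        K * (∑ i ∈ M, |z i|) + edgeNorm W (E \ bdry E cl) z)
    (xhat : V → ℝ)
    (hmin : ∀ z : V → ℝ,
      (∑ i ∈ M, |xhat i - y i|) + (1 / K) * edgeNorm W E xhat ≤
        (∑ i ∈ M, |z i - y i|) + (1 / K) * edgeNorm W E z) :
    (1 / K) * (L - 1) * edgeNorm W (bdry E cl) (fun i => xhat i - x i) ≤
      2 * ∑ i ∈ M, |e i| := by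
  set t : V → ℝ := fun i => xhat i - x i with ht
  set Bd := bdry E cl with hBd
  have hsub : Bd ⊆ E := Finset.filter_subset _ _
  have hWnn : ∀ p ∈ E, 0 ≤ W p.1 p.2 := fun p hp => (hWpos p hp).le
  have hsplit : ∀ z : V → ℝ,
      edgeNorm W E z = edgeNorm W Bd z + edgeNorm W (E \ Bd) z := by
    intro z
    unfold edgeNorm
    rw [← Finset.sum_sdiff hsub]
    ring
  have hnb : ∀ p ∈ E \ Bd, x p.1 = x p.2 := by
    intro p hp
    rw [Finset.mem_sdiff] at hp
    have hcl : cl p.1 = cl p.2 := by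
      by_contra hne
      exact hp.2 (Finset.mem_filter.mpr ⟨hp.1, hne⟩)
    rw [hx, hx, hcl]
  have hCt : edgeNorm W (E \ Bd) xhat = edgeNorm W (E \ Bd) t := by
    unfold edgeNorm
    congr 1
    apply Finset.sum_congr rfl
    intro p hp
    have hteq : t p.1 - t p.2 = xhat p.1 - xhat p.2 := by
      have := hnb p hp
      simp only [ht]
      linarith
    rw [hteq]
  have hx0 : edgeNorm W (E \ Bd) x = 0 := by
    unfold edgeNorm
    rw [Finset.sum_eq_zero, zero_div]
    intro p hp
    rw [hnb p hp]
    simp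
  have htri : edgeNorm W Bd x ≤ edgeNorm W Bd xhat + edgeNorm W Bd t := by
    have hs : ∑ p ∈ Bd, W p.1 p.2 * |x p.1 - x p.2| ≤
        ∑ p ∈ Bd, (W p.1 p.2 * |xhat p.1 - xhat p.2| + W p.1 p.2 * |t p.1 - t p.2|) := by
      apply Finset.sum_le_sum
      intro p hp
      have hw := hWnn p (hsub hp)
      have habs : |x p.1 - x p.2| ≤ |xhat p.1 - xhat p.2| + |t p.1 - t p.2| := by
        have heq : x p.1 - x p.2 = (xhat p.1 - xhat p.2) - (t p.1 - t p.2) := by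
          simp only [ht]; ring
        rw [heq]
        exact abs_sub _ _
      nlinarith [mul_le_mul_of_nonneg_left habs hw]
    rw [Finset.sum_add_distrib] at hs
    unfold edgeNorm
    linarith
  have hS : ∑ i ∈ M, |t i| ≤ (∑ i ∈ M, |xhat i - y i|) + ∑ i ∈ M, |e i| := by
    rw [← Finset.sum_add_distrib]
    apply Finset.sum_le_sum
    intro i hi
    have heq : t i = (xhat i - y i) + e i := by
      simp only [ht, hy i hi]; ring
    rw [heq]
    exact abs_add_le _ _
  have h6 := hmin x
  have h7 := hcompat t
  have hxy : ∑ i ∈ M, |x i - y i| = ∑ i ∈ M, |e i| := by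
    apply Finset.sum_congr rfl
    intro i hi
    rw [hy i hi, show x i - (x i + e i) = -e i by ring, abs_neg]
  rw [hsplit xhat, hsplit x, hx0, add_zero, hCt, hxy] at h6
  have hKne : K ≠ 0 := ne_of_gt hK
  have h6' := mul_le_mul_of_nonneg_left h6 hK.le
  have hfrac : K * (1 / K) = 1 := by field_simp
  have e1 : K * (∑ i ∈ M, |xhat i - y i| +
      1 / K * (edgeNorm W Bd xhat + edgeNorm W (E \ Bd) t)) =
      K * (∑ i ∈ M, |xhat i - y i|) +
        (edgeNorm W Bd xhat + edgeNorm W (E \ Bd) t) := by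
    field_simp
  have e2 : K * (∑ i ∈ M, |e i| + 1 / K * edgeNorm W Bd x) =
      K * (∑ i ∈ M, |e i|) + edgeNorm W Bd x := by
    field_simp
  rw [e1, e2] at h6'
  have hS' := mul_le_mul_of_nonneg_left hS hK.le
  rw [show (1 / K) * (L - 1) * edgeNorm W Bd t =
      ((L - 1) * edgeNorm W Bd t) / K from by ring, div_le_iff₀ hK]
  nlinarith [h7, hS', htri, h6']
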